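/- Let τ_1 and τ_2 be adjacent Φ-topes with τ_1 ⊆ c(Φ), let H be their common wall, and let A be the set of i such that φ_i lies in the open side of H containing τ_1. Then B(Φ_flip^A, τ_2) equals the symmetric difference B(Φ,τ_1) △ B(Φ,τ_2); more precisely, K ∈ B(Φ,τ_1) and K ∉ B(Φ,τ_2) if and only if K ∈ B(Φ_flip^A,τ_2) and K ∩ A ≠ ∅, while K ∈ B(Φ,τ_2) and K ∉ B(Φ,τ_1) if and only if K ∈ B(Φ_flip^A,τ_2) and K ∩ A = ∅. Moreover the cone c(Φ_flip^A) is salient, and τ_2 is contained in at least one of the cones c(Φ) or c(Φ_flip^A). -/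

import Mathlib

open scoped Pointwise
open Classical MvPolynomial

set_option maxHeartbeats 2000000

noncomputable section

namespace AC

section Defs

variable {E : Type*} [AddCommGroup E] [Module ℝ E]
variable {ι : Type*} [Fintype ι] [DecidableEq ι]

/-- Characteristic function of a set, with values in `ℝ`. -/
def charFn {α : Type*} (s : Set α) (x : α) : ℝ := if x ∈ s then 1 else 0

/-- The cone of nonnegative linear combinations of `{Ψ i : i ∈ I}`. -/
def coneOf (Ψ : ι → E) (I : Set ι) : Set E :=
  {v | ∃ c : ι → ℝ, (∀ i, 0 ≤ c i) ∧ (∀ i, i ∉ I → c i = 0) ∧ v = ∑ i, c i • Ψ i}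

/-- The cone of nonnegative linear combinations of all the `Ψ i`. -/
def fullCone (Ψ : ι → E) : Set E := coneOf Ψ Set.univ

/-- A cone is salient if it contains no line, i.e. `v, -v ∈ C → v = 0`. -/
def Salient (C : Set E) : Prop := ∀ v ∈ C, -v ∈ C → v = 0

/-- A wall: a hyperplane spanned by `dim E - 1` linearly independent members of `Ψ`. -/
def IsWall (Ψ : ι → E) (H : Submodule ℝ E) : Prop :=
  ∃ S : Finset ι, S.card + 1 = Module.finrank ℝ E ∧
    LinearIndependent ℝ (fun i : {x // x ∈ S} => Ψ i.1) ∧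
    H = Submodule.span ℝ (Ψ '' ↑S)

/-- An element is regular when it lies on no wall. -/
def IsRegular (Ψ : ι → E) (μ : E) : Prop :=
  ∀ H : Submodule ℝ E, IsWall Ψ H → μ ∉ H

/-- `G(Ψ,τ)`: generating subsets whose cone contains `τ`. -/
def Gens (Ψ : ι → E) (τ : Set E) : Set (Finset ι) :=
  {I | Submodule.span ℝ (Ψ '' ↑I) = ⊤ ∧ τ ⊆ coneOf Ψ ↑I}

/-- `I` is basic when `{Ψ i : i ∈ I}` is a basis of `E`. -/
def IsBasic (Ψ : ι → E) (I : Finset ι) : Prop :=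
  LinearIndependent ℝ (fun i : {x // x ∈ I} => Ψ i.1) ∧
    Submodule.span ℝ (Ψ '' ↑I) = ⊤

/-- `B(Ψ,τ)`: basic subsets whose cone contains `τ`. -/
def Bases (Ψ : ι → E) (τ : Set E) : Set (Finset ι) :=
  {I | IsBasic Ψ I ∧ τ ⊆ coneOf Ψ ↑I}

/-- The combinatorial Brianchon-Gram polynomial `X(Ψ,τ)`; the variable `Sum.inl i`
plays the role of `p i` and `Sum.inr i` plays the role of `q i`. -/
def BGpoly (Ψ : ι → E) (τ : Set E) : MvPolynomial (ι ⊕ ι) ℤ :=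
  ∑ I : Finset ι,
    if I ∈ Gens Ψ τ then
      (-1 : MvPolynomial (ι ⊕ ι) ℤ) ^ (I.card - Module.finrank ℝ E) *
        ((∏ j ∈ Iᶜ, X (Sum.inl j)) * ∏ i ∈ I, (X (Sum.inl i) + X (Sum.inr i)))
    else 0

/-- The geometric Brianchon-Gram function `X_geom(Ψ,τ)` on `ℝ^ι`. -/
def XGeom (Ψ : ι → E) (τ : Set E) (x : ι → ℝ) : ℝ :=
  ∑ I : Finset ι,
    if I ∈ Gens Ψ τ then
      (-1 : ℝ) ^ (I.card - Module.finrank ℝ E) *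
        ∏ j ∈ Iᶜ, (if 0 ≤ x j then (1 : ℝ) else 0)
    else 0

/-- The affine subspace `V(Ψ,λ)`. -/
def affSlice (Ψ : ι → E) (lam : E) : Set (ι → ℝ) := {x | ∑ i, x i • Ψ i = lam}

/-- The partition polytope `p(Ψ,λ)`. -/
def partPoly (Ψ : ι → E) (lam : E) : Set (ι → ℝ) :=
  {x | (∀ i, 0 ≤ x i) ∧ ∑ i, x i • Ψ i = lam}

/-- The semi-closed quadrant `Q_neg^B`. -/
def Qneg (B : Finset ι) : Set (ι → ℝ) :=
  {x | (∀ i ∈ B, x i < 0) ∧ ∀ i ∉ B, 0 ≤ x i}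

/-- The flipped sequence `Ψ_flip^B`. -/
def flipSeq (Ψ : ι → E) (B : Finset ι) : ι → E := fun i => if i ∈ B then -Ψ i else Ψ i

/-- The zonotope `b(Ψ)`. -/
def zonotope (Ψ : ι → E) : Set E :=
  {v | ∃ t : ι → ℝ, (∀ i, 0 ≤ t i ∧ t i ≤ 1) ∧ v = ∑ i, t i • Ψ i}

/-- `x ∈ ℝ^ι` is a lattice point when all its coordinates are integers. -/
def isLatticePt (x : ι → ℝ) : Prop := ∀ i, ∃ n : ℤ, x i = (n : ℝ)

/-- `v` lies in the open side of the hyperplane `H` containing `τ`. -/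
def InOpenSideOf (H : Submodule ℝ E) (τ : Set E) (v : E) : Prop :=
  ∃ ξ : E →ₗ[ℝ] ℝ, (∀ h ∈ H, ξ h = 0) ∧ (∀ μ ∈ τ, 0 < ξ μ) ∧ 0 < ξ v

/-- The change of variables exchanging `p i` and `q i` for `i ∈ A`. -/
def flipVar (A : Finset ι) : ι ⊕ ι → ι ⊕ ι
  | Sum.inl i => if i ∈ A then Sum.inr i else Sum.inl i
  | Sum.inr i => if i ∈ A then Sum.inl i else Sum.inr i

/-- The ring map `Flip_A`, exchanging `p i` and `q i` for `i ∈ A`. -/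
def FlipPoly (A : Finset ι) (P : MvPolynomial (ι ⊕ ι) ℤ) : MvPolynomial (ι ⊕ ι) ℤ :=
  MvPolynomial.rename (flipVar A) P

/-- Value substituted for the variable `p i` in the substitution `Geom_A`. -/
def geomValA (A : Finset ι) (x : ι → ℝ) : ι → ℝ := fun i =>
  if i ∈ A then (if 0 < x i then 1 else 0) else (if 0 ≤ x i then 1 else 0)

/-- The substitution `Geom_A`: substitute `1 - p i` for `q i`, then `[x i ≥ 0]`
for `p i` if `i ∉ A`, and `[x i > 0]` for `p i` if `i ∈ A`. -/
def GeomA (A : Finset ι) (P : MvPolynomial (ι ⊕ ι) ℤ) (x : ι → ℝ) : ℝ :=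
  MvPolynomial.aeval (Sum.elim (geomValA A x) (fun i => 1 - geomValA A x i)) P

/-- The substitution `Geom`: `[x i ≥ 0]` for `p i`, `[x i < 0]` for `q i`. -/
def Geom (P : MvPolynomial (ι ⊕ ι) ℤ) (x : ι → ℝ) : ℝ := GeomA ∅ P x

/-- The semi-closed flipped partition polytope `p_flip(Ψ,A,λ)`. -/
def pflip (Ψ : ι → E) (A : Finset ι) (lam : E) : Set (ι → ℝ) :=
  {x | (∑ i, x i • Ψ i = lam) ∧ (∀ i ∈ A, x i < 0) ∧ ∀ i ∉ A, 0 ≤ x i}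

/-- The linear map `x ↦ ∑ i, x i • Ψ i`. -/
def Mmap (Ψ : ι → E) : (ι → ℝ) →ₗ[ℝ] E where
  toFun x := ∑ i, x i • Ψ i
  map_add' x y := by simp [add_smul, Finset.sum_add_distrib]
  map_smul' c x := by simp [smul_smul, Finset.smul_sum]

/-- A polynomial function on a finite-dimensional real vector space. -/
def IsPolynomialFun {W : Type*} [AddCommGroup W] [Module ℝ W] (f : W → ℝ) : Prop :=
  ∃ (n : ℕ) (b : Module.Basis (Fin n) ℝ W) (p : MvPolynomial (Fin n) ℝ),
    ∀ v, f v = MvPolynomial.eval (fun i => b.repr v i) p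

/-- `Λ` is a (full) lattice in `W`: the ℤ-span of some ℝ-basis. -/
def IsLattice {W : Type*} [AddCommGroup W] [Module ℝ W] (Λ : AddSubgroup W) : Prop :=
  ∃ b : Module.Basis (Fin (Module.finrank ℝ W)) ℝ W,
    ∀ v, v ∈ Λ ↔ ∀ i, ∃ n : ℤ, b.repr v i = (n : ℝ)

/-- Quasi-polynomial function on the lattice `Λ`: polynomial on each coset of
a finite-index sublattice (here `D • Λ`). -/
def IsQuasiPolynomialOn {W : Type*} [AddCommGroup W] [Module ℝ W]
    (Λ : AddSubgroup W) (f : W → ℝ) : Prop :=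
  ∃ D : ℕ, 0 < D ∧ ∀ lam₀ ∈ Λ, ∃ P : W → ℝ, IsPolynomialFun P ∧
    ∀ lam' ∈ Λ, f (lam₀ + D • lam') = P (lam₀ + D • lam')

end Defs

section Topes

variable {E : Type*} [AddCommGroup E] [Module ℝ E] [TopologicalSpace E]
variable {ι : Type*} [Fintype ι]

/-- A tope: a connected component of the set of regular elements. -/
def IsTope (Ψ : ι → E) (τ : Set E) : Prop :=
  ∃ μ, IsRegular Ψ μ ∧ τ = connectedComponentIn {x | IsRegular Ψ x} μ

/-- Two topes are adjacent along the wall `H` when the intersection of their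
closures is contained in `H` and spans `H`. -/
def Adjacent (Ψ : ι → E) (τ₁ τ₂ : Set E) (H : Submodule ℝ E) : Prop :=
  IsTope Ψ τ₁ ∧ IsTope Ψ τ₂ ∧ τ₁ ≠ τ₂ ∧ IsWall Ψ H ∧
    closure τ₁ ∩ closure τ₂ ⊆ (H : Set E) ∧
    Submodule.span ℝ (closure τ₁ ∩ closure τ₂) = H

end Topes

section MainAux

variable {F : Type*} [NormedAddCommGroup F] [NormedSpace ℝ F] [FiniteDimensional ℝ F]
variable {N : ℕ}

lemma pos_iff_of_mul_pos {x y : ℝ} (h : 0 < x * y) : (0 < x ↔ 0 < y) := by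
  constructor <;> intro hx <;> nlinarith

lemma sign_const {s : Set F} (hs : IsPreconnected s) (f : F →ₗ[ℝ] ℝ)
    (hf : ∀ x ∈ s, f x ≠ 0) {a b : F} (ha : a ∈ s) (hb : b ∈ s) (hfa : 0 < f a) : 0 < f b := by
  rcases lt_or_gt_of_ne (hf b hb) with h | h
  · exfalso
    have h0 : (0:ℝ) ∈ Set.Icc (f b) (f a) := ⟨le_of_lt h, le_of_lt hfa⟩
    have := hs.intermediate_value hb ha (f.continuous_of_finiteDimensional.continuousOn) h0
    obtain ⟨x, hx, hfx⟩ := this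
    exact hf x hx hfx
  · exact h

lemma closure_inter_eval (f : F →ₗ[ℝ] ℝ) {σ₁ σ₂ : Set F}
    (h1 : ∀ x ∈ σ₁, 0 < f x) (h2 : ∀ x ∈ σ₂, f x < 0) :
    ∀ x ∈ closure σ₁ ∩ closure σ₂, f x = 0 := by
  rintro x ⟨hx1, hx2⟩
  have hc := f.continuous_of_finiteDimensional
  have hge : 0 ≤ f x := by
    have hsub : closure σ₁ ⊆ {y | 0 ≤ f y} :=
      closure_minimal (fun y hy => le_of_lt (h1 y hy)) (isClosed_le continuous_const hc)
    exact hsub hx1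
  have hle : f x ≤ 0 := by
    have hsub : closure σ₂ ⊆ {y | f y ≤ 0} :=
      closure_minimal (fun y hy => le_of_lt (h2 y hy)) (isClosed_le hc continuous_const)
    exact hsub hx2
  linarith

def basisOfBasic (Φ : Fin N → F) (K : Finset (Fin N)) (h : IsBasic Φ K) :
    Module.Basis {x // x ∈ K} ℝ F :=
  Module.Basis.mk h.1 (by
    have : Set.range (fun i : {x // x ∈ K} => Φ i.1) = Φ '' ↑K := by
      ext v; simp [Set.mem_image]
    rw [this]; exact le_of_eq h.2.symm)

lemma basisOfBasic_apply (Φ : Fin N → F) (K : Finset (Fin N)) (h : IsBasic Φ K)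
    (j : {x // x ∈ K}) : basisOfBasic Φ K h j = Φ j.1 := Module.Basis.mk_apply _ _ _

lemma sum_subtype_eq (K : Finset (Fin N)) (f : Fin N → F) (hf : ∀ i ∉ K, f i = 0) :
    ∑ i, f i = ∑ j : {x // x ∈ K}, f j.1 := by
  rw [← Finset.sum_subset (Finset.subset_univ K) (fun x _ hx => hf x hx)]
  rw [Finset.univ_eq_attach, ← Finset.sum_attach K (fun i => f i)]

lemma repr_eq_of_sum (Φ : Fin N → F) (K : Finset (Fin N)) (h : IsBasic Φ K) (c : Fin N → ℝ)
    (hcK : ∀ i ∉ K, c i = 0) (μ : F) (hμ : μ = ∑ i, c i • Φ i) (j : {x // x ∈ K}) :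
    (basisOfBasic Φ K h).repr μ j = c j.1 := by
  have : μ = ∑ j : {x // x ∈ K}, c j.1 • basisOfBasic Φ K h j := by
    rw [hμ, sum_subtype_eq K (fun i => c i • Φ i) (fun i hi => by simp [hcK i hi])]
    simp_rw [basisOfBasic_apply]
  rw [this, Module.Basis.repr_sum_self]

lemma mem_coneOf_iff (Φ : Fin N → F) (K : Finset (Fin N)) (h : IsBasic Φ K) (μ : F) :
    μ ∈ coneOf Φ ↑K ↔ ∀ j : {x // x ∈ K}, 0 ≤ (basisOfBasic Φ K h).repr μ j := by
  constructor
  · rintro ⟨c, hc0, hcK, rfl⟩ j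
    rw [repr_eq_of_sum Φ K h c (fun i hi => hcK i (by simpa using hi)) _ rfl]
    exact hc0 j.1
  · intro hall
    refine ⟨fun i => if hi : i ∈ K then (basisOfBasic Φ K h).repr μ ⟨i, hi⟩ else 0, ?_, ?_, ?_⟩
    · intro i
      by_cases hi : i ∈ K
      · simpa [hi] using hall ⟨i, hi⟩
      · simp [hi]
    · intro i hi
      rw [Finset.mem_coe] at hi
      simp [hi]
    · rw [sum_subtype_eq K _ (fun i hi => by simp [hi])]
      conv_lhs => rw [← (basisOfBasic Φ K h).sum_repr μ]
      refine Finset.sum_congr rfl fun j _ => ?_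
      simp [basisOfBasic_apply]

lemma basic_card (Φ : Fin N → F) (K : Finset (Fin N)) (h : IsBasic Φ K) :
    K.card = Module.finrank ℝ F := by
  rw [Module.finrank_eq_card_basis (basisOfBasic Φ K h), Fintype.card_coe]

lemma span_image_eq_range_subtype (Φ : Fin N → F) (S : Finset (Fin N)) :
    Submodule.span ℝ (Φ '' ↑S) = Submodule.span ℝ (Set.range (fun i : {x // x ∈ S} => Φ i.1)) := by
  congr 1; ext v; simp [Set.mem_image]

lemma wall_finrank (Φ : Fin N → F) {H : Submodule ℝ F} (hw : IsWall Φ H) :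
    Module.finrank ℝ H + 1 = Module.finrank ℝ F := by
  obtain ⟨S, hcard, hli, rfl⟩ := hw
  rw [span_image_eq_range_subtype]
  rw [finrank_span_eq_card hli, Fintype.card_coe]
  exact hcard

lemma coord_ker (Φ : Fin N → F) (K : Finset (Fin N)) (h : IsBasic Φ K) (j : {x // x ∈ K}) :
    LinearMap.ker ((basisOfBasic Φ K h).coord j) =
      Submodule.span ℝ (Φ '' ↑(K.erase j.1)) := by
  set b := basisOfBasic Φ K h
  apply le_antisymm
  · intro v hv
    rw [LinearMap.mem_ker, Module.Basis.coord_apply] at hv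
    have hrepr := b.sum_repr v
    rw [← Finset.add_sum_erase _ _ (Finset.mem_univ j)] at hrepr
    rw [hv, zero_smul, zero_add] at hrepr
    rw [← hrepr]
    refine Submodule.sum_mem _ fun j' hj' => Submodule.smul_mem _ _ ?_
    rw [basisOfBasic_apply]
    refine Submodule.subset_span ⟨j'.1, ?_, rfl⟩
    rw [Finset.mem_erase] at hj'
    rw [Finset.coe_erase]
    refine Set.mem_diff_singleton.2 ⟨j'.2, ?_⟩
    exact fun hh => hj'.1 (Subtype.ext hh)
  · rw [Submodule.span_le]
    rintro v ⟨i, hi, rfl⟩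
    rw [Finset.coe_erase] at hi
    obtain ⟨hiK, hij'⟩ : i ∈ K ∧ ¬ i = j.1 := by simpa using hi
    have hij : i ≠ j.1 := hij'
    have hiK' : i ∈ K := hiK
    have : Φ i = b ⟨i, hiK'⟩ := (basisOfBasic_apply Φ K h ⟨i, hiK'⟩).symm
    rw [this]
    rw [SetLike.mem_coe, LinearMap.mem_ker, Module.Basis.coord_apply, Module.Basis.repr_self]
    rw [Finsupp.single_apply]
    simp only [ite_eq_right_iff]
    intro hh
    exact absurd (congrArg Subtype.val hh) hij

lemma isWall_erase (Φ : Fin N → F) {K : Finset (Fin N)} (h : IsBasic Φ K) {j : Fin N}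
    (hj : j ∈ K) : IsWall Φ (Submodule.span ℝ (Φ '' ↑(K.erase j))) := by
  refine ⟨K.erase j, ?_, ?_, rfl⟩
  · rw [Finset.card_erase_of_mem hj, ← basic_card Φ K h]
    have : 1 ≤ K.card := Finset.card_pos.2 ⟨j, hj⟩
    omega
  · exact h.1.comp
      (fun i : {x // x ∈ K.erase j} => (⟨i.1, Finset.mem_of_mem_erase i.2⟩ : {x // x ∈ K}))
      (fun a b hab => by
        apply Subtype.ext
        have : (⟨a.1, Finset.mem_of_mem_erase a.2⟩ : {x // x ∈ K}).1 =
            (⟨b.1, Finset.mem_of_mem_erase b.2⟩ : {x // x ∈ K}).1 := congrArg Subtype.val hab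
        exact this)

lemma exists_xi {H : Submodule ℝ F} (hH : Module.finrank ℝ H + 1 = Module.finrank ℝ F) :
    ∃ ξ : F →ₗ[ℝ] ℝ, LinearMap.ker ξ = H := by
  have hq : Module.finrank ℝ (F ⧸ H) = 1 := by
    have := Submodule.finrank_quotient_add_finrank H
    omega
  let b := Module.basisUnique Unit hq
  refine ⟨(b.coord default) ∘ₗ H.mkQ, ?_⟩
  ext v
  rw [LinearMap.mem_ker, LinearMap.comp_apply, Module.Basis.coord_apply]
  rw [Module.basisUnique_repr_eq_zero_iff]
  rw [Submodule.mkQ_apply, Submodule.Quotient.mk_eq_zero]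

lemma coneOf_mono (Φ : Fin N → F) {I J : Set (Fin N)} (hIJ : I ⊆ J) :
    coneOf Φ I ⊆ coneOf Φ J := by
  rintro v ⟨c, h0, hI, rfl⟩
  exact ⟨c, h0, fun i hi => hI i (fun hm => hi (hIJ hm)), rfl⟩

lemma coneOf_subset_fullCone (Φ : Fin N → F) (I : Set (Fin N)) :
    coneOf Φ I ⊆ fullCone Φ := coneOf_mono Φ (Set.subset_univ I)

lemma li_flip (Φ : Fin N → F) (A : Finset (Fin N)) (K : Finset (Fin N))
    (h : LinearIndependent ℝ (fun i : {x // x ∈ K} => Φ i.1)) :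
    LinearIndependent ℝ (fun i : {x // x ∈ K} => flipSeq Φ A i.1) := by
  have := h.units_smul (w := fun i : {x // x ∈ K} => if i.1 ∈ A then (-1 : ℝˣ) else 1)
  convert this using 1
  funext i
  by_cases hi : i.1 ∈ A <;> simp [flipSeq, hi, Units.smul_def]

lemma span_flip (Φ : Fin N → F) (A : Finset (Fin N)) (s : Set (Fin N)) :
    Submodule.span ℝ (flipSeq Φ A '' s) = Submodule.span ℝ (Φ '' s) := by
  apply le_antisymm <;> rw [Submodule.span_le] <;> rintro v ⟨i, hi, rfl⟩
  · by_cases hiA : i ∈ A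
    · have : flipSeq Φ A i = -Φ i := by simp [flipSeq, hiA]
      rw [this]
      exact Submodule.neg_mem _ (Submodule.subset_span ⟨i, hi, rfl⟩)
    · have : flipSeq Φ A i = Φ i := by simp [flipSeq, hiA]
      rw [this]
      exact Submodule.subset_span ⟨i, hi, rfl⟩
  · by_cases hiA : i ∈ A
    · have : Φ i = -flipSeq Φ A i := by simp [flipSeq, hiA]
      rw [this]
      exact Submodule.neg_mem _ (Submodule.subset_span ⟨i, hi, rfl⟩)
    · have : Φ i = flipSeq Φ A i := by simp [flipSeq, hiA]
      rw [this]
      exact Submodule.subset_span ⟨i, hi, rfl⟩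

lemma isBasic_flip (Φ : Fin N → F) (A K : Finset (Fin N)) (h : IsBasic Φ K) :
    IsBasic (flipSeq Φ A) K := ⟨li_flip Φ A K h.1, by rw [span_flip]; exact h.2⟩

lemma isBasic_flip_iff (Φ : Fin N → F) (A K : Finset (Fin N)) :
    IsBasic (flipSeq Φ A) K ↔ IsBasic Φ K := by
  constructor
  · intro h
    have h2 := isBasic_flip (flipSeq Φ A) A K h
    have : flipSeq (flipSeq Φ A) A = Φ := by
      funext i; by_cases hi : i ∈ A <;> simp [flipSeq, hi]
    rwa [this] at h2
  · exact isBasic_flip Φ A K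

lemma exists_li_support (Φ : Fin N → F) {μ : F} (hμ : μ ∈ fullCone Φ) :
    ∃ T : Finset (Fin N), LinearIndependent ℝ (fun i : {x // x ∈ T} => Φ i.1) ∧
      μ ∈ coneOf Φ ↑T := by
  obtain ⟨c, hc0, -, hsum⟩ := hμ
  suffices H : ∀ n (c : Fin N → ℝ), (∀ i, 0 ≤ c i) → μ = ∑ i, c i • Φ i →
      (Finset.univ.filter fun i => c i ≠ 0).card ≤ n →
      ∃ T : Finset (Fin N), LinearIndependent ℝ (fun i : {x // x ∈ T} => Φ i.1) ∧
        μ ∈ coneOf Φ ↑T by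
    exact H (Finset.univ.filter fun i => c i ≠ 0).card c hc0 hsum le_rfl
  intro n
  induction n with
  | zero =>
    intro c hc0 hsum hcard
    have hT : (Finset.univ.filter fun i => c i ≠ 0) = ∅ :=
      Finset.card_eq_zero.1 (Nat.le_zero.1 hcard)
    refine ⟨∅, ?_, ?_⟩
    · have : IsEmpty {x : Fin N // x ∈ (∅ : Finset (Fin N))} := by
        constructor; rintro ⟨x, hx⟩; simp at hx
      exact linearIndependent_empty_type
    · refine ⟨c, hc0, ?_, hsum⟩
      intro i _
      by_contra hne
      have : i ∈ (Finset.univ.filter fun i => c i ≠ 0) := by simp [hne]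
      rw [hT] at this; simp at this
  | succ n ih =>
    intro c hc0 hsum hcard
    set T := Finset.univ.filter fun i => c i ≠ 0 with hTdef
    by_cases hli : LinearIndependent ℝ (fun i : {x // x ∈ T} => Φ i.1)
    · refine ⟨T, hli, c, hc0, ?_, hsum⟩
      intro i hi
      by_contra hne
      exact hi (by simp [hTdef, hne])
    · rw [Fintype.linearIndependent_iff] at hli
      push_neg at hli
      obtain ⟨g, hgsum, j₀, hgj₀⟩ := hli
      set d : Fin N → ℝ := fun i => if h : i ∈ T then g ⟨i, h⟩ else 0 with hd
      have hdsum : ∑ i, d i • Φ i = 0 := by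
        rw [← hgsum]
        rw [show (∑ i, d i • Φ i) = ∑ i ∈ T, d i • Φ i from
          (Finset.sum_subset (Finset.subset_univ T) (fun x _ hx => by simp [hd, hx])).symm]
        rw [← Finset.sum_attach T (fun i => d i • Φ i)]
        refine Finset.sum_congr rfl fun j _ => ?_
        simp [hd, j.2]
      have hdsupp : ∀ i, d i ≠ 0 → i ∈ T := by
        intro i hi
        by_contra h
        exact hi (by simp [hd, h])
      have key : ∀ d : Fin N → ℝ, (∑ i, d i • Φ i = 0) → (∀ i, d i ≠ 0 → i ∈ T) →
          (∃ i, 0 < d i) →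
          ∃ T' : Finset (Fin N),
            LinearIndependent ℝ (fun i : {x // x ∈ T'} => Φ i.1) ∧ μ ∈ coneOf Φ ↑T' := by
        intro d hdsum hdsupp hex
        obtain ⟨i₁, hi₁⟩ := hex
        set P := T.filter fun i => 0 < d i with hP
        have hPne : P.Nonempty := ⟨i₁, by simp [hP, hdsupp i₁ (ne_of_gt hi₁), hi₁]⟩
        set t := (P.image fun i => c i / d i).min' (hPne.image _) with ht
        obtain ⟨i₀, hi₀P, hi₀⟩ : ∃ i₀ ∈ P, c i₀ / d i₀ = t := by
          have := (P.image fun i => c i / d i).min'_mem (hPne.image _)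
          rw [Finset.mem_image] at this
          obtain ⟨i₀, h1, h2⟩ := this
          exact ⟨i₀, h1, h2⟩
        have hi₀d : 0 < d i₀ := (Finset.mem_filter.1 hi₀P).2
        have hi₀T : i₀ ∈ T := (Finset.mem_filter.1 hi₀P).1
        have htle : ∀ i ∈ P, t ≤ c i / d i := fun i hi =>
          Finset.min'_le _ _ (Finset.mem_image_of_mem _ hi)
        have ht0 : 0 ≤ t := by
          rw [← hi₀]
          exact div_nonneg (hc0 i₀) (le_of_lt hi₀d)
        set c' : Fin N → ℝ := fun i => c i - t * d i with hc'
        have hc'0 : ∀ i, 0 ≤ c' i := by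
          intro i
          rcases le_or_gt (d i) 0 with hdi | hdi
          · have : t * d i ≤ 0 := mul_nonpos_of_nonneg_of_nonpos ht0 hdi
            simp only [hc']
            linarith [hc0 i]
          · have hiP : i ∈ P := by
              simp [hP, hdsupp i (ne_of_gt hdi), hdi]
            have h2 := htle i hiP
            rw [le_div_iff₀ hdi] at h2
            simp only [hc']; linarith
        have hc'i₀ : c' i₀ = 0 := by
          simp only [hc', ← hi₀]
          field_simp
          ring
        have hc'supp : (Finset.univ.filter fun i => c' i ≠ 0) ⊆ T.erase i₀ := by
          intro i hi
          rw [Finset.mem_filter] at hi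
          rw [Finset.mem_erase]
          constructor
          · rintro rfl; exact hi.2 hc'i₀
          · by_contra hiT
            have h1 : c i = 0 := by
              by_contra hne; exact hiT (by simp [hTdef, hne])
            have h2 : d i = 0 := by
              by_contra hne; exact hiT (hdsupp i hne)
            exact hi.2 (by simp [hc', h1, h2])
        have hc'sum : μ = ∑ i, c' i • Φ i := by
          simp only [hc', sub_smul, mul_smul, Finset.sum_sub_distrib]
          rw [← Finset.smul_sum, hdsum, smul_zero, sub_zero, hsum]
        refine ih c' hc'0 hc'sum ?_
        calc (Finset.univ.filter fun i => c' i ≠ 0).card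
            ≤ (T.erase i₀).card := Finset.card_le_card hc'supp
          _ = T.card - 1 := Finset.card_erase_of_mem hi₀T
          _ ≤ n := by omega
      by_cases hpos : ∃ i, 0 < d i
      · exact key d hdsum hdsupp hpos
      · push_neg at hpos
        refine key (fun i => -d i) ?_ ?_ ?_
        · simp only [neg_smul, Finset.sum_neg_distrib, hdsum, neg_zero]
        · intro i hi
          refine hdsupp i (fun h => hi ?_)
          show -d i = 0
          rw [h, neg_zero]
        · refine ⟨j₀, ?_⟩
          have hdg : d j₀.1 = g j₀ := by simp [hd, j₀.2]
          have h1 : d j₀.1 ≠ 0 := by rw [hdg]; exact hgj₀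
          have h2 := hpos j₀.1
          simp only [neg_pos]
          rcases lt_or_eq_of_le h2 with h | h
          · exact h
          · exact absurd h h1

lemma extend_to_basic (Φ : Fin N → F) (hgen : Submodule.span ℝ (Set.range Φ) = ⊤)
    {T : Finset (Fin N)} (hT : LinearIndependent ℝ (fun i : {x // x ∈ T} => Φ i.1)) :
    ∃ K : Finset (Fin N), T ⊆ K ∧ IsBasic Φ K := by
  suffices H : ∀ n (T : Finset (Fin N)),
      LinearIndependent ℝ (fun i : {x // x ∈ T} => Φ i.1) →
      Module.finrank ℝ F - T.card ≤ n →
      ∃ K : Finset (Fin N), T ⊆ K ∧ IsBasic Φ K by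
    exact H _ T hT le_rfl
  intro n
  induction n with
  | zero =>
    intro T hT hc
    refine ⟨T, le_refl _, hT, ?_⟩
    have hle : Module.finrank ℝ F ≤ T.card := by omega
    have hge : Fintype.card {x // x ∈ T} ≤ Module.finrank ℝ F :=
      hT.fintype_card_le_finrank
    rw [Fintype.card_coe] at hge
    have hcard : Fintype.card {x // x ∈ T} = Module.finrank ℝ F := by
      rw [Fintype.card_coe]; omega
    have := hT.span_eq_top_of_card_eq_finrank' hcard
    rwa [span_image_eq_range_subtype]
  | succ n ih =>
    intro T hT hc
    by_cases hsp : Submodule.span ℝ (Φ '' ↑T) = ⊤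
    · exact ⟨T, le_refl _, hT, hsp⟩
    · have hex : ∃ i, Φ i ∉ Submodule.span ℝ (Φ '' ↑T) := by
        by_contra h
        push_neg at h
        apply hsp
        rw [eq_top_iff, ← hgen, Submodule.span_le]
        rintro v ⟨i, rfl⟩
        exact h i
      obtain ⟨i, hi⟩ := hex
      have hiT : i ∉ T := fun h => hi (Submodule.subset_span ⟨i, h, rfl⟩)
      have hins : LinearIndependent ℝ (fun j : {x // x ∈ insert i T} => Φ j.1) := by
        rw [Fintype.linearIndependent_iff]
        intro g hg
        set G : Fin N → ℝ := fun j => if h : j ∈ insert i T then g ⟨j, h⟩ else 0 with hG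
        have hGeq : ∀ j : {x // x ∈ insert i T}, G j.1 = g j := fun j => dif_pos j.2
        have hsum : ∑ j ∈ insert i T, G j • Φ j = 0 := by
          rw [← hg, ← Finset.sum_attach (insert i T) (fun j => G j • Φ j)]
          exact Finset.sum_congr rfl fun j _ => by rw [hGeq j]
        rw [Finset.sum_insert hiT] at hsum
        have hGi : G i = 0 := by
          by_contra hGi
          apply hi
          have h1 : G i • Φ i = -∑ j ∈ T, G j • Φ j := by
            linear_combination (norm := module) hsum
          have h2 : (-(G i)⁻¹) • ∑ j ∈ T, G j • Φ j = Φ i := by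
            rw [neg_smul, ← smul_neg, ← h1, smul_smul, inv_mul_cancel₀ hGi, one_smul]
          rw [← h2]
          refine Submodule.smul_mem _ _ (Submodule.sum_mem _ fun j hj => ?_)
          exact Submodule.smul_mem _ _ (Submodule.subset_span ⟨j, hj, rfl⟩)
        rw [hGi, zero_smul, zero_add] at hsum
        have hT' := Fintype.linearIndependent_iff.1 hT
        have hzero : ∀ j : {x // x ∈ T}, G j.1 = 0 := by
          apply hT'
          rw [← Finset.sum_attach T (fun j => G j • Φ j)] at hsum
          exact hsum
        intro j
        rw [← hGeq j]
        rcases Finset.mem_insert.1 j.2 with hj | hj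
        · rw [hj]; exact hGi
        · exact hzero ⟨j.1, hj⟩
      obtain ⟨K, hsub, hbasic⟩ := ih (insert i T) hins (by
        rw [Finset.card_insert_of_notMem hiT]; omega)
      exact ⟨K, le_trans (Finset.subset_insert i T) hsub, hbasic⟩

lemma exists_basic_cone_mem (Φ : Fin N → F) (hgen : Submodule.span ℝ (Set.range Φ) = ⊤)
    {μ : F} (hμ : μ ∈ fullCone Φ) :
    ∃ K : Finset (Fin N), IsBasic Φ K ∧ μ ∈ coneOf Φ ↑K := by
  obtain ⟨T, hli, hmem⟩ := exists_li_support Φ hμ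
  obtain ⟨K, hTK, hbasic⟩ := extend_to_basic Φ hgen hli
  exact ⟨K, hbasic, coneOf_mono Φ (by exact_mod_cast hTK) hmem⟩

lemma repr_ne_zero (Φ : Fin N → F) {K : Finset (Fin N)} (hb : IsBasic Φ K)
    (j : {x // x ∈ K}) {μ : F} (hreg : IsRegular Φ μ) :
    (basisOfBasic Φ K hb).repr μ j ≠ 0 := by
  intro h0
  have hxk : μ ∈ LinearMap.ker ((basisOfBasic Φ K hb).coord j) := by
    rw [LinearMap.mem_ker, Module.Basis.coord_apply]; exact h0
  rw [coord_ker] at hxk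
  exact hreg _ (isWall_erase Φ hb j.2) hxk

lemma repr_sign_transfer (Φ : Fin N → F) {K : Finset (Fin N)} (hb : IsBasic Φ K)
    {τ : Set F} (hconn : IsPreconnected τ) (hreg : ∀ μ ∈ τ, IsRegular Φ μ)
    {aa bb : F} (haa : aa ∈ τ) (hbb : bb ∈ τ) (j : {x // x ∈ K})
    (hpos : 0 < (basisOfBasic Φ K hb).repr aa j) :
    0 < (basisOfBasic Φ K hb).repr bb j := by
  have := sign_const hconn ((basisOfBasic Φ K hb).coord j)
    (fun x hx h0 => repr_ne_zero Φ hb j (hreg x hx) (by rwa [Module.Basis.coord_apply] at h0))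
    haa hbb (by rwa [Module.Basis.coord_apply])
  rwa [Module.Basis.coord_apply] at this

lemma repr_sign_transfer_neg (Φ : Fin N → F) {K : Finset (Fin N)} (hb : IsBasic Φ K)
    {τ : Set F} (hconn : IsPreconnected τ) (hreg : ∀ μ ∈ τ, IsRegular Φ μ)
    {aa bb : F} (haa : aa ∈ τ) (hbb : bb ∈ τ) (j : {x // x ∈ K})
    (hneg : (basisOfBasic Φ K hb).repr aa j < 0) :
    (basisOfBasic Φ K hb).repr bb j < 0 := by
  by_contra hge
  have hbbpos : 0 < (basisOfBasic Φ K hb).repr bb j :=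
    lt_of_le_of_ne (not_lt.1 hge) (Ne.symm (repr_ne_zero Φ hb j (hreg bb hbb)))
  have := repr_sign_transfer Φ hb hconn hreg hbb haa j hbbpos
  linarith

lemma bases_mem_iff_point (Φ : Fin N → F) {K : Finset (Fin N)} (hb : IsBasic Φ K)
    {τ : Set F} (hconn : IsPreconnected τ) (hreg : ∀ μ ∈ τ, IsRegular Φ μ)
    {μ₀ : F} (hμ₀ : μ₀ ∈ τ) :
    τ ⊆ coneOf Φ ↑K ↔ ∀ j : {x // x ∈ K}, 0 < (basisOfBasic Φ K hb).repr μ₀ j := by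
  constructor
  · intro hsub j
    have h0 := (mem_coneOf_iff Φ K hb μ₀).1 (hsub hμ₀) j
    exact lt_of_le_of_ne h0 (Ne.symm (repr_ne_zero Φ hb j (hreg μ₀ hμ₀)))
  · intro hall μ hμ
    rw [mem_coneOf_iff Φ K hb μ]
    intro j
    exact le_of_lt (repr_sign_transfer Φ hb hconn hreg hμ₀ hμ j (hall j))

lemma mem_coneOf_flip_iff (Φ : Fin N → F) (A : Finset (Fin N)) (K : Finset (Fin N))
    (hb : IsBasic Φ K) (μ : F) :
    μ ∈ coneOf (flipSeq Φ A) ↑K ↔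
      ∀ j : {x // x ∈ K}, (j.1 ∈ A → (basisOfBasic Φ K hb).repr μ j ≤ 0) ∧
        (j.1 ∉ A → 0 ≤ (basisOfBasic Φ K hb).repr μ j) := by
  constructor
  · rintro ⟨c, hc0, hcK, rfl⟩ j
    set c' : Fin N → ℝ := fun i => if i ∈ A then -c i else c i with hc'
    have hsum : ∑ i, c i • flipSeq Φ A i = ∑ i, c' i • Φ i := by
      refine Finset.sum_congr rfl fun i _ => ?_
      by_cases hi : i ∈ A <;> simp [hc', flipSeq, hi]
    have := repr_eq_of_sum Φ K hb c'
      (fun i hi => by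
        have : c i = 0 := hcK i (by simpa using hi)
        by_cases hiA : i ∈ A <;> simp [hc', hiA, this]) _ hsum j
    rw [this]
    constructor <;> intro hj
    · simp only [hc', if_pos hj, Left.neg_nonpos_iff]; exact hc0 j.1
    · simp only [hc', if_neg hj]; exact hc0 j.1
  · intro hall
    refine ⟨fun i => if h : i ∈ K then
        (if i ∈ A then -((basisOfBasic Φ K hb).repr μ ⟨i, h⟩)
          else (basisOfBasic Φ K hb).repr μ ⟨i, h⟩) else 0, ?_, ?_, ?_⟩
    · intro i
      by_cases hiK : i ∈ K
      · by_cases hiA : i ∈ A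
        · simp only [dif_pos hiK, if_pos hiA, Left.nonneg_neg_iff]
          exact (hall ⟨i, hiK⟩).1 hiA
        · simp only [dif_pos hiK, if_neg hiA]
          exact (hall ⟨i, hiK⟩).2 hiA
      · simp [hiK]
    · intro i hi
      rw [Finset.mem_coe] at hi
      simp [hi]
    · rw [sum_subtype_eq K _ (fun i hi => by simp [hi])]
      conv_lhs => rw [← (basisOfBasic Φ K hb).sum_repr μ]
      refine Finset.sum_congr rfl fun j _ => ?_
      dsimp only
      rw [dif_pos j.2]
      by_cases hjA : j.1 ∈ A
      · rw [if_pos hjA]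
        show _ = -(basisOfBasic Φ K hb).repr μ j • flipSeq Φ A j.1
        have hfl : flipSeq Φ A j.1 = -Φ j.1 := by simp [flipSeq, hjA]
        rw [hfl, basisOfBasic_apply, neg_smul, smul_neg, neg_neg]
      · rw [if_neg hjA]
        show _ = (basisOfBasic Φ K hb).repr μ j • flipSeq Φ A j.1
        have hfl : flipSeq Φ A j.1 = Φ j.1 := by simp [flipSeq, hjA]
        rw [hfl, basisOfBasic_apply]

lemma bases_mem_flip_iff_point (Φ : Fin N → F) (A : Finset (Fin N)) {K : Finset (Fin N)}
    (hb : IsBasic Φ K) {τ : Set F} (hconn : IsPreconnected τ)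
    (hreg : ∀ μ ∈ τ, IsRegular Φ μ) {μ₀ : F} (hμ₀ : μ₀ ∈ τ) :
    τ ⊆ coneOf (flipSeq Φ A) ↑K ↔
      ∀ j : {x // x ∈ K}, (j.1 ∈ A → (basisOfBasic Φ K hb).repr μ₀ j < 0) ∧
        (j.1 ∉ A → 0 < (basisOfBasic Φ K hb).repr μ₀ j) := by
  constructor
  · intro hsub j
    have h0 := (mem_coneOf_flip_iff Φ A K hb μ₀).1 (hsub hμ₀) j
    have hnz := repr_ne_zero Φ hb j (hreg μ₀ hμ₀)
    constructor
    · intro hjA; exact lt_of_le_of_ne (h0.1 hjA) hnz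
    · intro hjA; exact lt_of_le_of_ne (h0.2 hjA) (Ne.symm hnz)
  · intro hall μ hμ
    rw [mem_coneOf_flip_iff Φ A K hb μ]
    intro j
    constructor
    · intro hjA
      exact le_of_lt (repr_sign_transfer_neg Φ hb hconn hreg hμ₀ hμ j ((hall j).1 hjA))
    · intro hjA
      exact le_of_lt (repr_sign_transfer Φ hb hconn hreg hμ₀ hμ j ((hall j).2 hjA))

end MainAux

/-- `B(Φ_flip^A, τ₂)` is the symmetric difference `B(Φ,τ₁) △ B(Φ,τ₂)`, with
the two halves characterized by whether `K` meets `A`; moreover `c(Φ_flip^A)`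
is salient and `τ₂` is contained in `c(Φ)` or in `c(Φ_flip^A)`. -/
theorem bases_of_flipped_system
    {F : Type*} [NormedAddCommGroup F] [NormedSpace ℝ F] [FiniteDimensional ℝ F]
    {N : ℕ} (Φ : Fin N → F)
    (hne : ∀ i, Φ i ≠ 0)
    (hgen : Submodule.span ℝ (Set.range Φ) = ⊤)
    (hsal : ∃ a : F →ₗ[ℝ] ℝ, ∀ i, 0 < a (Φ i))
    (τ₁ τ₂ : Set F) (H : Submodule ℝ F) (hadj : Adjacent Φ τ₁ τ₂ H)
    (hτ₁c : τ₁ ⊆ fullCone Φ)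
    (A : Finset (Fin N)) (hA : ∀ i, i ∈ A ↔ InOpenSideOf H τ₁ (Φ i)) :
    (∀ K : Finset (Fin N),
      (K ∈ Bases Φ τ₁ ∧ K ∉ Bases Φ τ₂) ↔
        (K ∈ Bases (flipSeq Φ A) τ₂ ∧ (K ∩ A).Nonempty)) ∧
    (∀ K : Finset (Fin N),
      (K ∈ Bases Φ τ₂ ∧ K ∉ Bases Φ τ₁) ↔
        (K ∈ Bases (flipSeq Φ A) τ₂ ∧ K ∩ A = ∅)) ∧
    Salient (fullCone (flipSeq Φ A)) ∧
    (τ₂ ⊆ fullCone Φ ∨ τ₂ ⊆ fullCone (flipSeq Φ A)) := by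
  classical
  obtain ⟨ht1, ht2, hne12, hwall, hCsub, hCspan⟩ := hadj
  obtain ⟨μ₁, hreg1, hτ₁eq⟩ := ht1
  obtain ⟨μ₂, hreg2, hτ₂eq⟩ := ht2
  have hμ₁ : μ₁ ∈ τ₁ := by rw [hτ₁eq]; exact mem_connectedComponentIn hreg1
  have hμ₂ : μ₂ ∈ τ₂ := by rw [hτ₂eq]; exact mem_connectedComponentIn hreg2
  have hreg₁' : ∀ μ ∈ τ₁, IsRegular Φ μ := by
    intro μ hμ; rw [hτ₁eq] at hμ; exact connectedComponentIn_subset _ _ hμ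
  have hreg₂' : ∀ μ ∈ τ₂, IsRegular Φ μ := by
    intro μ hμ; rw [hτ₂eq] at hμ; exact connectedComponentIn_subset _ _ hμ
  have hconn₁ : IsPreconnected τ₁ := by rw [hτ₁eq]; exact isPreconnected_connectedComponentIn
  have hconn₂ : IsPreconnected τ₂ := by rw [hτ₂eq]; exact isPreconnected_connectedComponentIn
  -- the linear functional ξ cutting out H, positive on τ₁
  have hHrank := wall_finrank Φ hwall
  obtain ⟨ξ0, hξ0⟩ := exists_xi hHrank
  have hμ₁H : ξ0 μ₁ ≠ 0 := fun h => hreg1 H hwall (by rw [← hξ0]; exact LinearMap.mem_ker.2 h)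
  set ξ : F →ₗ[ℝ] ℝ := if 0 < ξ0 μ₁ then ξ0 else -ξ0 with hξdef
  have hξker : LinearMap.ker ξ = H := by
    by_cases h : 0 < ξ0 μ₁
    · rw [hξdef, if_pos h]; exact hξ0
    · rw [hξdef, if_neg h, ← hξ0]
      ext v; simp [LinearMap.mem_ker]
  have hξμ₁ : 0 < ξ μ₁ := by
    by_cases h : 0 < ξ0 μ₁
    · rw [hξdef, if_pos h]; exact h
    · rw [hξdef, if_neg h]
      have : ξ0 μ₁ < 0 := lt_of_le_of_ne (not_lt.1 h) hμ₁H
      simpa using this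
  have hξnz : ∀ μ, IsRegular Φ μ → ξ μ ≠ 0 := fun μ hm h =>
    hm H hwall (by rw [← hξker]; exact LinearMap.mem_ker.2 h)
  have hξH : ∀ v ∈ H, ξ v = 0 := fun v hv =>
    LinearMap.mem_ker.1 (by rw [hξker]; exact hv)
  have hξpos₁ : ∀ μ ∈ τ₁, 0 < ξ μ :=
    fun μ hμ => sign_const hconn₁ ξ (fun x hx => hξnz x (hreg₁' x hx)) hμ₁ hμ hξμ₁
  -- characterization of A through ξ
  have hAchar : ∀ i, i ∈ A ↔ 0 < ξ (Φ i) := by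
    intro i
    rw [hA i]
    constructor
    · rintro ⟨ξ', hξ'H, hξ'τ, hξ'i⟩
      have hprop : ∀ v, ξ' v * ξ μ₁ = ξ v * ξ' μ₁ := by
        intro v
        have hv : v - (ξ v / ξ μ₁) • μ₁ ∈ LinearMap.ker ξ := by
          rw [LinearMap.mem_ker, map_sub, map_smul, smul_eq_mul,
            div_mul_cancel₀ _ (ne_of_gt hξμ₁), sub_self]
        rw [hξker] at hv
        have h0 := hξ'H _ hv
        rw [map_sub, map_smul, smul_eq_mul, sub_eq_zero] at h0
        rw [h0]
        field_simp
      have h1 := hprop (Φ i)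
      have h2 : 0 < ξ' μ₁ := hξ'τ μ₁ hμ₁
      nlinarith
    · intro hi
      exact ⟨ξ, hξH, hξpos₁, hi⟩
  have hAnot : ∀ i, Φ i ∈ H → i ∉ A := by
    intro i hi hiA
    have h1 := (hAchar i).1 hiA
    rw [hξH _ hi] at h1
    exact lt_irrefl 0 h1
  -- the per-basis package
  have pack : ∀ K : Finset (Fin N),
      ((K ∈ Bases Φ τ₁ ∧ K ∉ Bases Φ τ₂) ↔
        (K ∈ Bases (flipSeq Φ A) τ₂ ∧ (K ∩ A).Nonempty)) ∧
      ((K ∈ Bases Φ τ₂ ∧ K ∉ Bases Φ τ₁) ↔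
        (K ∈ Bases (flipSeq Φ A) τ₂ ∧ K ∩ A = ∅)) := by
    intro K
    by_cases hb : IsBasic Φ K
    case neg =>
      have h1 : K ∉ Bases Φ τ₁ := fun h => hb h.1
      have h2 : K ∉ Bases Φ τ₂ := fun h => hb h.1
      have hF : K ∉ Bases (flipSeq Φ A) τ₂ := fun h => hb ((isBasic_flip_iff Φ A K).1 h.1)
      exact ⟨⟨fun h => absurd h.1 h1, fun h => absurd h.1 hF⟩,
             ⟨fun h => absurd h.1 h2, fun h => absurd h.1 hF⟩⟩
    case pos =>
    have hmem1 : K ∈ Bases Φ τ₁ ↔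
        ∀ j : {x // x ∈ K}, 0 < (basisOfBasic Φ K hb).repr μ₁ j := by
      constructor
      · intro h; exact (bases_mem_iff_point Φ hb hconn₁ hreg₁' hμ₁).1 h.2
      · intro h; exact ⟨hb, (bases_mem_iff_point Φ hb hconn₁ hreg₁' hμ₁).2 h⟩
    have hmem2 : K ∈ Bases Φ τ₂ ↔
        ∀ j : {x // x ∈ K}, 0 < (basisOfBasic Φ K hb).repr μ₂ j := by
      constructor
      · intro h; exact (bases_mem_iff_point Φ hb hconn₂ hreg₂' hμ₂).1 h.2
      · intro h; exact ⟨hb, (bases_mem_iff_point Φ hb hconn₂ hreg₂' hμ₂).2 h⟩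
    have hmemF : K ∈ Bases (flipSeq Φ A) τ₂ ↔
        ∀ j : {x // x ∈ K}, (j.1 ∈ A → (basisOfBasic Φ K hb).repr μ₂ j < 0) ∧
          (j.1 ∉ A → 0 < (basisOfBasic Φ K hb).repr μ₂ j) := by
      constructor
      · intro h; exact (bases_mem_flip_iff_point Φ A hb hconn₂ hreg₂' hμ₂).1 h.2
      · intro h; exact ⟨isBasic_flip Φ A K hb,
          (bases_mem_flip_iff_point Φ A hb hconn₂ hreg₂' hμ₂).2 h⟩
    have n1 : ∀ j : {x // x ∈ K}, (basisOfBasic Φ K hb).repr μ₁ j ≠ 0 :=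
      fun j => repr_ne_zero Φ hb j hreg1
    have n2 : ∀ j : {x // x ∈ K}, (basisOfBasic Φ K hb).repr μ₂ j ≠ 0 :=
      fun j => repr_ne_zero Φ hb j hreg2
    have hsumid : ∀ μ : F,
        ξ μ = ∑ j : {x // x ∈ K}, (basisOfBasic Φ K hb).repr μ j * ξ (Φ j.1) := by
      intro μ
      conv_lhs => rw [← (basisOfBasic Φ K hb).sum_repr μ]
      rw [map_sum]
      refine Finset.sum_congr rfl fun j _ => ?_
      rw [map_smul, smul_eq_mul, basisOfBasic_apply]
    have dichot : ∀ j : {x // x ∈ K},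
        ((0 < (basisOfBasic Φ K hb).repr μ₁ j ↔ 0 < (basisOfBasic Φ K hb).repr μ₂ j)) ∨
        Submodule.span ℝ (Φ '' ↑(K.erase j.1)) = H := by
      intro j
      by_cases hiff : (0 < (basisOfBasic Φ K hb).repr μ₁ j ↔
          0 < (basisOfBasic Φ K hb).repr μ₂ j)
      · exact Or.inl hiff
      right
      have hker : ∀ x ∈ closure τ₁ ∩ closure τ₂, ((basisOfBasic Φ K hb).coord j) x = 0 := by
        by_cases h1 : 0 < (basisOfBasic Φ K hb).repr μ₁ j
        · have h2 : (basisOfBasic Φ K hb).repr μ₂ j < 0 := by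
            rcases lt_or_gt_of_ne (n2 j) with h | h
            · exact h
            · exact absurd (fun _ => h) (fun hh => hiff ⟨hh, fun _ => h1⟩)
          exact closure_inter_eval ((basisOfBasic Φ K hb).coord j)
            (fun x hx => by
              rw [Module.Basis.coord_apply]
              exact repr_sign_transfer Φ hb hconn₁ hreg₁' hμ₁ hx j h1)
            (fun x hx => by
              rw [Module.Basis.coord_apply]
              exact repr_sign_transfer_neg Φ hb hconn₂ hreg₂' hμ₂ hx j h2)
        · have h1' : (basisOfBasic Φ K hb).repr μ₁ j < 0 :=
            lt_of_le_of_ne (not_lt.1 h1) (n1 j)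
          have h2 : 0 < (basisOfBasic Φ K hb).repr μ₂ j := by
            rcases lt_or_gt_of_ne (n2 j) with h | h
            · exfalso
              exact hiff ⟨fun hp => absurd hp h1, fun hp => absurd hp (not_lt.2 (le_of_lt h))⟩
            · exact h
          intro x hx
          have := closure_inter_eval ((basisOfBasic Φ K hb).coord j)
            (fun x hx => by
              rw [Module.Basis.coord_apply]
              exact repr_sign_transfer Φ hb hconn₂ hreg₂' hμ₂ hx j h2)
            (fun x hx => by
              rw [Module.Basis.coord_apply]
              exact repr_sign_transfer_neg Φ hb hconn₁ hreg₁' hμ₁ hx j h1')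
            x ⟨hx.2, hx.1⟩
          exact this
      have hHle : H ≤ LinearMap.ker ((basisOfBasic Φ K hb).coord j) := by
        rw [← hCspan, Submodule.span_le]
        intro x hx
        rw [SetLike.mem_coe, LinearMap.mem_ker]
        exact hker x hx
      rw [coord_ker] at hHle
      have hw := isWall_erase Φ hb j.2
      have hwr := wall_finrank Φ hw
      exact (Submodule.eq_of_le_of_finrank_eq hHle (by omega)).symm
    have Hformula : ∀ j : {x // x ∈ K}, Submodule.span ℝ (Φ '' ↑(K.erase j.1)) = H →
        ∀ μ : F, ξ μ = (basisOfBasic Φ K hb).repr μ j * ξ (Φ j.1) := by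
      intro j hj μ
      have hmem : μ - (basisOfBasic Φ K hb).repr μ j • Φ j.1 ∈
          Submodule.span ℝ (Φ '' ↑(K.erase j.1)) := by
        rw [← coord_ker Φ K hb j, LinearMap.mem_ker, map_sub, map_smul, smul_eq_mul]
        rw [Module.Basis.coord_apply, Module.Basis.coord_apply]
        have hone : (basisOfBasic Φ K hb).repr (Φ j.1) j = 1 := by
          rw [← basisOfBasic_apply Φ K hb j]
          simp [Module.Basis.repr_self]
        rw [hone]; ring
      rw [hj] at hmem
      have h0 := hξH _ hmem
      rw [map_sub, map_smul, smul_eq_mul] at h0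
      linarith
    have HmemH : ∀ j : {x // x ∈ K}, Submodule.span ℝ (Φ '' ↑(K.erase j.1)) = H →
        ∀ j' : {x // x ∈ K}, j' ≠ j → Φ j'.1 ∈ H := by
      intro j hj j' hne
      rw [← hj]
      refine Submodule.subset_span ⟨j'.1, ?_, rfl⟩
      rw [Finset.coe_erase]
      refine Set.mem_diff_singleton.2 ⟨j'.2, ?_⟩
      exact fun hh => hne (Subtype.ext hh)
    have Huniq : ∀ j j' : {x // x ∈ K},
        Submodule.span ℝ (Φ '' ↑(K.erase j.1)) = H →
        Submodule.span ℝ (Φ '' ↑(K.erase j'.1)) = H → j = j' := by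
      intro j j' hj hj'
      by_contra hne
      have hall : Submodule.span ℝ (Φ '' ↑K) ≤ H := by
        rw [Submodule.span_le]
        rintro v ⟨i, hi, rfl⟩
        rw [Finset.mem_coe] at hi
        by_cases hij : (⟨i, hi⟩ : {x // x ∈ K}) = j
        · have hmem := HmemH j' hj' j hne
          have hiv : i = j.1 := congrArg Subtype.val hij
          rw [hiv]; exact hmem
        · exact HmemH j hj ⟨i, hi⟩ hij
      rw [hb.2] at hall
      have htop : H = ⊤ := le_antisymm le_top hall
      rw [htop, finrank_top] at hHrank
      omega
    constructor
    · -- first equivalence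
      rw [hmem1, hmem2, hmemF]
      constructor
      · rintro ⟨hP1, hP2⟩
        rw [not_forall] at hP2
        obtain ⟨j₀, hj₀⟩ := hP2
        have hr2j₀ : (basisOfBasic Φ K hb).repr μ₂ j₀ < 0 :=
          lt_of_le_of_ne (not_lt.1 hj₀) (n2 j₀)
        have hHj₀ : Submodule.span ℝ (Φ '' ↑(K.erase j₀.1)) = H := by
          rcases dichot j₀ with hiff | hH
          · exact absurd (hiff.1 (hP1 j₀)) hj₀
          · exact hH
        have hprod : 0 < (basisOfBasic Φ K hb).repr μ₁ j₀ * ξ (Φ j₀.1) := by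
          rw [← Hformula j₀ hHj₀ μ₁]; exact hξμ₁
        have hξΦj₀pos : 0 < ξ (Φ j₀.1) := (pos_iff_of_mul_pos hprod).1 (hP1 j₀)
        have hj₀A : j₀.1 ∈ A := (hAchar j₀.1).2 hξΦj₀pos
        refine ⟨?_, ⟨j₀.1, Finset.mem_inter.2 ⟨j₀.2, hj₀A⟩⟩⟩
        intro j
        by_cases hjj : j = j₀
        · subst hjj
          exact ⟨fun _ => hr2j₀, fun hna => absurd hj₀A hna⟩
        · have hjH : Φ j.1 ∈ H := HmemH j₀ hHj₀ j hjj
          have hjnA : j.1 ∉ A := hAnot j.1 hjH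
          have hjstraight : (0 < (basisOfBasic Φ K hb).repr μ₁ j ↔
              0 < (basisOfBasic Φ K hb).repr μ₂ j) := by
            rcases dichot j with hiff | hH
            · exact hiff
            · exact absurd (Huniq j j₀ hH hHj₀) hjj
          exact ⟨fun hja => absurd hja hjnA, fun _ => hjstraight.1 (hP1 j)⟩
      · rintro ⟨hF, hne⟩
        obtain ⟨i₁, hi₁⟩ := hne
        rw [Finset.mem_inter] at hi₁
        by_cases hHex : ∃ j : {x // x ∈ K}, Submodule.span ℝ (Φ '' ↑(K.erase j.1)) = H
        · obtain ⟨j₀, hHj₀⟩ := hHex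
          have hj₁j₀ : (⟨i₁, hi₁.1⟩ : {x // x ∈ K}) = j₀ := by
            by_contra hne'
            exact hAnot i₁ (HmemH j₀ hHj₀ ⟨i₁, hi₁.1⟩ hne') hi₁.2
          have hj₀A : j₀.1 ∈ A := by
            have : (⟨i₁, hi₁.1⟩ : {x // x ∈ K}).1 ∈ A := hi₁.2
            rwa [hj₁j₀] at this
          have hξΦj₀pos : 0 < ξ (Φ j₀.1) := (hAchar j₀.1).1 hj₀A
          have hr2j₀ : (basisOfBasic Φ K hb).repr μ₂ j₀ < 0 := (hF j₀).1 hj₀A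
          have hprod : 0 < (basisOfBasic Φ K hb).repr μ₁ j₀ * ξ (Φ j₀.1) := by
            rw [← Hformula j₀ hHj₀ μ₁]; exact hξμ₁
          have hP1j₀ : 0 < (basisOfBasic Φ K hb).repr μ₁ j₀ :=
            (pos_iff_of_mul_pos hprod).2 hξΦj₀pos
          refine ⟨?_, ?_⟩
          · intro j
            by_cases hjj : j = j₀
            · subst hjj; exact hP1j₀
            · have hjH : Φ j.1 ∈ H := HmemH j₀ hHj₀ j hjj
              have hjnA : j.1 ∉ A := hAnot j.1 hjH
              have hr2j : 0 < (basisOfBasic Φ K hb).repr μ₂ j := (hF j).2 hjnA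
              have hjstraight : (0 < (basisOfBasic Φ K hb).repr μ₁ j ↔
                  0 < (basisOfBasic Φ K hb).repr μ₂ j) := by
                rcases dichot j with hiff | hH
                · exact hiff
                · exact absurd (Huniq j j₀ hH hHj₀) hjj
              exact hjstraight.2 hr2j
          · intro hall
            exact absurd (hall j₀) (not_lt.2 (le_of_lt hr2j₀))
        · exfalso
          push_neg at hHex
          have hstraight : ∀ j : {x // x ∈ K},
              (0 < (basisOfBasic Φ K hb).repr μ₁ j ↔
                0 < (basisOfBasic Φ K hb).repr μ₂ j) :=
            fun j => (dichot j).resolve_right (hHex j)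
          have hsumle : ∑ j : {x // x ∈ K},
              (basisOfBasic Φ K hb).repr μ₁ j * ξ (Φ j.1) ≤ 0 := by
            apply Finset.sum_nonpos
            intro j _
            by_cases hjA : j.1 ∈ A
            · have h2 : (basisOfBasic Φ K hb).repr μ₂ j < 0 := (hF j).1 hjA
              have h1 : (basisOfBasic Φ K hb).repr μ₁ j < 0 := by
                rcases lt_or_gt_of_ne (n1 j) with h | h
                · exact h
                · exact absurd ((hstraight j).1 h) (not_lt.2 (le_of_lt h2))
              have hxp : 0 < ξ (Φ j.1) := (hAchar _).1 hjA
              exact le_of_lt (mul_neg_of_neg_of_pos h1 hxp)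
            · have h2 : 0 < (basisOfBasic Φ K hb).repr μ₂ j := (hF j).2 hjA
              have h1 : 0 < (basisOfBasic Φ K hb).repr μ₁ j := (hstraight j).2 h2
              have hxp : ξ (Φ j.1) ≤ 0 := not_lt.1 (fun h => hjA ((hAchar _).2 h))
              exact mul_nonpos_of_nonneg_of_nonpos (le_of_lt h1) hxp
          rw [← hsumid μ₁] at hsumle
          linarith
    · -- second equivalence
      rw [hmem1, hmem2, hmemF]
      constructor
      · rintro ⟨hP2, hP1⟩
        rw [not_forall] at hP1
        obtain ⟨j₀, hj₀⟩ := hP1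
        have hr1j₀ : (basisOfBasic Φ K hb).repr μ₁ j₀ < 0 :=
          lt_of_le_of_ne (not_lt.1 hj₀) (n1 j₀)
        have hHj₀ : Submodule.span ℝ (Φ '' ↑(K.erase j₀.1)) = H := by
          rcases dichot j₀ with hiff | hH
          · exact absurd (hiff.2 (hP2 j₀)) hj₀
          · exact hH
        have hf := Hformula j₀ hHj₀ μ₁
        have hξΦj₀neg : ξ (Φ j₀.1) < 0 := by nlinarith
        have hempty : K ∩ A = ∅ := by
          rw [Finset.eq_empty_iff_forall_notMem]
          intro i hi
          rw [Finset.mem_inter] at hi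
          by_cases hij : (⟨i, hi.1⟩ : {x // x ∈ K}) = j₀
          · have hiv : i = j₀.1 := congrArg Subtype.val hij
            have : 0 < ξ (Φ i) := (hAchar i).1 hi.2
            rw [hiv] at this
            linarith
          · exact hAnot i (HmemH j₀ hHj₀ ⟨i, hi.1⟩ hij) hi.2
        refine ⟨?_, hempty⟩
        intro j
        constructor
        · intro hjA
          exfalso
          have : j.1 ∈ K ∩ A := Finset.mem_inter.2 ⟨j.2, hjA⟩
          rw [hempty] at this
          simp at this
        · intro _; exact hP2 j
      · rintro ⟨hF, hempty⟩
        have hnA : ∀ j : {x // x ∈ K}, j.1 ∉ A := by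
          intro j hjA
          have : j.1 ∈ K ∩ A := Finset.mem_inter.2 ⟨j.2, hjA⟩
          rw [hempty] at this
          simp at this
        have hP2 : ∀ j : {x // x ∈ K}, 0 < (basisOfBasic Φ K hb).repr μ₂ j :=
          fun j => (hF j).2 (hnA j)
        refine ⟨hP2, ?_⟩
        intro hP1'
        have hsumle : ∑ j : {x // x ∈ K},
            (basisOfBasic Φ K hb).repr μ₁ j * ξ (Φ j.1) ≤ 0 :=
          Finset.sum_nonpos fun j _ =>
            mul_nonpos_of_nonneg_of_nonpos (le_of_lt (hP1' j))
              (not_lt.1 fun h => hnA j ((hAchar _).2 h))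
        rw [← hsumid μ₁] at hsumle
        linarith
  -- salience of the flipped cone
  have hsal3 : Salient (fullCone (flipSeq Φ A)) := by
    obtain ⟨a, ha⟩ := hsal
    set t : ℝ := 1 + ∑ i ∈ A, a (Φ i) / ξ (Φ i) with htdef
    have hterm : ∀ i ∈ A, 0 ≤ a (Φ i) / ξ (Φ i) := fun i hi =>
      div_nonneg (le_of_lt (ha i)) (le_of_lt ((hAchar i).1 hi))
    have ht0 : 0 < t := by
      have := Finset.sum_nonneg hterm
      rw [htdef]; linarith
    have hc : ∀ i, 0 < (a - t • ξ) (flipSeq Φ A i) := by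
      intro i
      by_cases hi : i ∈ A
      · have hξi : 0 < ξ (Φ i) := (hAchar i).1 hi
        have hle : a (Φ i) / ξ (Φ i) ≤ ∑ i' ∈ A, a (Φ i') / ξ (Φ i') :=
          Finset.single_le_sum hterm hi
        have htgt : a (Φ i) / ξ (Φ i) < t := by rw [htdef]; linarith
        rw [div_lt_iff₀ hξi] at htgt
        have hflip : flipSeq Φ A i = -Φ i := by simp [flipSeq, hi]
        rw [hflip, map_neg]
        have hval : (a - t • ξ) (Φ i) = a (Φ i) - t * ξ (Φ i) := by
          simp [LinearMap.sub_apply, LinearMap.smul_apply, smul_eq_mul]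
        rw [hval]
        linarith
      · have hξi : ξ (Φ i) ≤ 0 := not_lt.1 (fun h => hi ((hAchar i).2 h))
        have hflip : flipSeq Φ A i = Φ i := by simp [flipSeq, hi]
        rw [hflip]
        have hval : (a - t • ξ) (Φ i) = a (Φ i) - t * ξ (Φ i) := by
          simp [LinearMap.sub_apply, LinearMap.smul_apply, smul_eq_mul]
        rw [hval]
        nlinarith [ha i]
    intro v hv hneg
    obtain ⟨cv, hcv0, -, hveq⟩ := hv
    obtain ⟨dv, hdv0, -, hweq⟩ := hneg
    have h1 : 0 ≤ (a - t • ξ) v := by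
      rw [hveq, map_sum]
      apply Finset.sum_nonneg
      intro i _
      rw [map_smul, smul_eq_mul]
      exact mul_nonneg (hcv0 i) (le_of_lt (hc i))
    have h2 : 0 ≤ (a - t • ξ) (-v) := by
      rw [hweq, map_sum]
      apply Finset.sum_nonneg
      intro i _
      rw [map_smul, smul_eq_mul]
      exact mul_nonneg (hdv0 i) (le_of_lt (hc i))
    rw [map_neg] at h2
    have h3 : (a - t • ξ) v = 0 := le_antisymm (by linarith) h1
    have h4 : ∑ i, cv i * (a - t • ξ) (flipSeq Φ A i) = 0 := by
      rw [← h3, hveq, map_sum]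
      exact Finset.sum_congr rfl fun i _ => by rw [map_smul, smul_eq_mul]
    have h5 := (Finset.sum_eq_zero_iff_of_nonneg
      (fun i _ => mul_nonneg (hcv0 i) (le_of_lt (hc i)))).1 h4
    have h6 : ∀ i, cv i = 0 := by
      intro i
      have := h5 i (Finset.mem_univ i)
      rcases mul_eq_zero.1 this with h | h
      · exact h
      · exact absurd h (ne_of_gt (hc i))
    rw [hveq]
    exact Finset.sum_eq_zero fun i _ => by rw [h6 i, zero_smul]
  -- τ₂ sits in one of the two full cones
  have hclaim4 : τ₂ ⊆ fullCone Φ ∨ τ₂ ⊆ fullCone (flipSeq Φ A) := by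
    obtain ⟨K₀, hK₀b, hK₀mem⟩ := exists_basic_cone_mem Φ hgen (hτ₁c hμ₁)
    have hK₀pos : ∀ j : {x // x ∈ K₀}, 0 < (basisOfBasic Φ K₀ hK₀b).repr μ₁ j := fun j =>
      lt_of_le_of_ne ((mem_coneOf_iff Φ K₀ hK₀b μ₁).1 hK₀mem j)
        (Ne.symm (repr_ne_zero Φ hK₀b j hreg1))
    have hK₀B1 : K₀ ∈ Bases Φ τ₁ :=
      ⟨hK₀b, (bases_mem_iff_point Φ hK₀b hconn₁ hreg₁' hμ₁).2 hK₀pos⟩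
    by_cases h2 : K₀ ∈ Bases Φ τ₂
    · left
      exact fun μ hμ => coneOf_subset_fullCone Φ ↑K₀ (h2.2 hμ)
    · right
      have hKF := ((pack K₀).1.1 ⟨hK₀B1, h2⟩).1
      exact fun μ hμ => coneOf_subset_fullCone (flipSeq Φ A) ↑K₀ (hKF.2 hμ)
  exact ⟨fun K => (pack K).1, fun K => (pack K).2, hsal3, hclaim4⟩

end AC
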